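/- For any positive integers K, m, n, z, every coefficient in the power series expansion of 1/((q^z; q^m)_K) − 1/((q^{nz}; q^{nm})_K) is nonnegative. -/

import Mathlib

open Finset PowerSeries

/-- `(q^c; q^m)_L = ∏_{j=0}^{L-1} (1 - q^{c+jm})` as a formal power series over `ℚ`. -/
noncomputable def qp (c m L : ℕ) : PowerSeries ℚ :=
  ∏ j ∈ Finset.range L, (1 - (PowerSeries.X : PowerSeries ℚ) ^ (c + j * m))

namespace DualAux

/-- nonnegative coefficients -/
def NN (f : PowerSeries ℚ) : Prop := ∀ x, 0 ≤ PowerSeries.coeff x f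

lemma NN.mul {f g : PowerSeries ℚ} (hf : NN f) (hg : NN g) : NN (f * g) := by
  intro x
  rw [PowerSeries.coeff_mul]
  exact Finset.sum_nonneg fun p _ => mul_nonneg (hf p.1) (hg p.2)

lemma NN.one : NN (1 : PowerSeries ℚ) := by
  intro x
  rw [PowerSeries.coeff_one]
  split <;> norm_num

lemma NN.prod {s : Finset ℕ} {f : ℕ → PowerSeries ℚ} (h : ∀ j ∈ s, NN (f j)) :
    NN (∏ j ∈ s, f j) :=
  Finset.prod_induction f NN (fun _ _ => NN.mul) NN.one h

/-- the geometric series `∑ X^{bk}` -/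
noncomputable def geo (b : ℕ) : PowerSeries ℚ :=
  PowerSeries.mk fun k => if b ∣ k then 1 else 0

lemma NN.geo (b : ℕ) : NN (geo b) := by
  intro x
  rw [DualAux.geo, PowerSeries.coeff_mk]
  split <;> norm_num

lemma geo_mul (b : ℕ) (hb : 0 < b) : geo b * (1 - X ^ b) = 1 := by
  ext n
  rw [mul_sub, mul_one, map_sub, PowerSeries.coeff_mul_X_pow', geo, PowerSeries.coeff_mk,
    PowerSeries.coeff_one]
  rcases Nat.eq_zero_or_pos n with rfl | hn
  · simp [Nat.not_succ_le_zero, hb.ne']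
  · have hne : n ≠ 0 := hn.ne'
    simp only [hne, if_false]
    by_cases hdvd : b ∣ n
    · have hle : b ≤ n := Nat.le_of_dvd hn hdvd
      have : b ∣ n - b := (Nat.dvd_sub hdvd dvd_rfl)
      rw [if_pos hdvd, if_pos hle, PowerSeries.coeff_mk, if_pos this]
      ring
    · rw [if_neg hdvd]
      by_cases hle : b ≤ n
      · have : ¬ b ∣ n - b := by
          intro h
          exact hdvd (by simpa [Nat.sub_add_cancel hle] using Nat.dvd_add h (dvd_refl b))
        rw [if_pos hle, PowerSeries.coeff_mk, if_neg this]
        ring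
      · rw [if_neg hle]; ring

lemma constCoeff_one_sub_X_pow (b : ℕ) (hb : 0 < b) :
    PowerSeries.constantCoeff (1 - X ^ b : PowerSeries ℚ) = 1 := by
  rw [map_sub, map_one, map_pow, PowerSeries.constantCoeff_X, zero_pow hb.ne']
  ring

lemma constCoeff_qp (c m L : ℕ) (hc : 0 < c) :
    PowerSeries.constantCoeff (qp c m L) = 1 := by
  rw [qp, map_prod]
  refine Finset.prod_eq_one fun j _ => constCoeff_one_sub_X_pow _ (by positivity)

lemma qp_inv_eq (c m L : ℕ) (hc : 0 < c) :
    (qp c m L)⁻¹ = ∏ j ∈ Finset.range L, geo (c + j * m) := by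
  have hmul : qp c m L * ∏ j ∈ Finset.range L, geo (c + j * m) = 1 := by
    rw [qp, ← Finset.prod_mul_distrib]
    refine Finset.prod_eq_one fun j _ => ?_
    rw [mul_comm]
    exact geo_mul _ (by positivity)
  have hc0 : PowerSeries.constantCoeff (qp c m L) ≠ 0 := by
    rw [constCoeff_qp c m L hc]; norm_num
  calc (qp c m L)⁻¹ = (qp c m L)⁻¹ * (qp c m L * ∏ j ∈ Finset.range L, geo (c + j * m)) := by
        rw [hmul, mul_one]
    _ = ((qp c m L)⁻¹ * qp c m L) * ∏ j ∈ Finset.range L, geo (c + j * m) := by ring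
    _ = ∏ j ∈ Finset.range L, geo (c + j * m) := by
        rw [PowerSeries.inv_mul_cancel _ hc0, one_mul]

lemma NN.qp_inv (c m L : ℕ) (hc : 0 < c) : NN (qp c m L)⁻¹ := by
  rw [qp_inv_eq c m L hc]
  exact NN.prod fun j _ => NN.geo _

end DualAux

open DualAux in
theorem dual_L_eq_zero_case (K m n z : ℕ) (hK : 0 < K) (hm : 0 < m) (hn : 0 < n) (hz : 0 < z)
    (x : ℕ) :
    0 ≤ PowerSeries.coeff x ((qp z m K)⁻¹ - (qp (n * z) (n * m) K)⁻¹) := by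
  set G : PowerSeries ℚ := ∏ j ∈ Finset.range K, ∑ i ∈ Finset.range n, X ^ (i * (z + j * m))
    with hG
  have hfac : qp (n * z) (n * m) K = qp z m K * G := by
    rw [qp, qp, hG, ← Finset.prod_mul_distrib]
    refine Finset.prod_congr rfl fun j _ => ?_
    have : (1 - X ^ (z + j * m)) * ∑ i ∈ Finset.range n, (X : PowerSeries ℚ) ^ ((z + j * m) * i)
        = 1 - (X ^ (z + j * m)) ^ n := by
      simpa [pow_mul] using mul_neg_geom_sum ((X : PowerSeries ℚ) ^ (z + j * m)) n
    calc (1 : PowerSeries ℚ) - X ^ (n * z + j * (n * m))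
        = 1 - (X ^ (z + j * m)) ^ n := by rw [← pow_mul]; ring_nf
      _ = (1 - X ^ (z + j * m)) * ∑ i ∈ Finset.range n, X ^ (i * (z + j * m)) := by
          rw [← this]
          congr 1
          exact Finset.sum_congr rfl fun i _ => by rw [mul_comm]
  have hGconst : PowerSeries.constantCoeff G = 1 := by
    rw [hG, map_prod]
    refine Finset.prod_eq_one fun j _ => ?_
    rw [map_sum]
    rw [Finset.sum_eq_single 0]
    · simp
    · intro i _ hi
      rw [map_pow, PowerSeries.constantCoeff_X, zero_pow]
      positivity
    · intro h
      exact absurd (Finset.mem_range.2 hn) h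
  have hGnn : NN G := by
    rw [hG]
    refine NN.prod fun j _ => ?_
    intro y
    rw [map_sum]
    refine Finset.sum_nonneg fun i _ => ?_
    rw [PowerSeries.coeff_X_pow]
    split <;> norm_num
  have hBnn : NN (qp (n * z) (n * m) K)⁻¹ := NN.qp_inv _ _ _ (by positivity)
  have hGne : PowerSeries.constantCoeff G ≠ 0 := by rw [hGconst]; norm_num
  have key : (qp z m K)⁻¹ - (qp (n * z) (n * m) K)⁻¹
      = (qp (n * z) (n * m) K)⁻¹ * (G - 1) := by
    rw [mul_sub, mul_one, hfac, PowerSeries.mul_inv_rev]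
    have h2 : G⁻¹ * G = 1 := PowerSeries.inv_mul_cancel _ hGne
    linear_combination (-(qp z m K)⁻¹) * h2
  rw [key]
  refine NN.mul hBnn ?_ x
  intro y
  rw [map_sub, PowerSeries.coeff_one]
  rcases Nat.eq_zero_or_pos y with rfl | hy
  · have : PowerSeries.coeff 0 G = 1 := by rw [PowerSeries.coeff_zero_eq_constantCoeff, hGconst]
    simp [this]
  · rw [if_neg hy.ne']
    simpa using hGnn y
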